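/- arXiv:2001.05758 — 3 statements merged into one kernel-verified Lean document; each statement's English description precedes it below -/
import Mathlib

section
/- Let X be a simplicial set, ι an index set, and for each j ∈ ι let xⱼ be a non-degenerate nⱼ-simplex of X and ρⱼ : [nⱼ] ⟶ [mⱼ] an enforcer of xⱼ. Let Y be the pushout in SSet of the map ⨿ⱼ Δ[nⱼ] ⟶ ⨿ⱼ Δ[mⱼ] induced by the ρⱼ along the map ⨿ⱼ Δ[nⱼ] ⟶ X induced by the representing maps of the xⱼ, and let q : X ⟶ Y be the resulting coprojection. Then for every non-singular simplicial set A and every simplicial map k : X ⟶ A there is a unique map k̄ : Y ⟶ A with k = k̄ ∘ q. -/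
open CategoryTheory CategoryTheory.Limits Simplicial SSet

/-- The `i`-th vertex of an `n`-simplex `x`, i.e. `x · εᵢ`, where `εᵢ : [0] ⟶ [n]`
sends `0` to `i`. -/
def SSet.vertex (X : SSet) {n : ℕ} (x : X _⦋n⦌) (i : Fin (n + 1)) : X _⦋0⦌ :=
  X.map (SimplexCategory.const ⦋0⦌ ⦋n⦌ i).op x

/-- A simplex is degenerate if it is obtained from a simplex of strictly lower degree
by the action of a (necessarily non-identity) epimorphism of the simplex category. -/
def SSet.IsDegenerate (X : SSet) {n : ℕ} (x : X _⦋n⦌) : Prop :=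
  ∃ (m : ℕ) (_ : m < n) (σ : (⦋n⦌ : SimplexCategory) ⟶ ⦋m⦌) (y : X _⦋m⦌),
    Epi σ ∧ x = X.map σ.op y

/-- A simplicial set is non-singular if the representing map of each of its
non-degenerate simplices is a monomorphism. -/
def SSet.NonSingular (X : SSet) : Prop :=
  ∀ (n : ℕ) (x : X _⦋n⦌), ¬ X.IsDegenerate x → Mono ((SSet.yonedaEquiv (X := X) (n := ⦋n⦌)).symm x)

/-- The relation `≈ₓ` on `Fin (n + 1)`: `i ≈ₓ k` iff there exists `j` with
`i ≤ k`, `k ≤ j` and `x·εᵢ = x·εⱼ`. -/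
def SSet.approxRel (X : SSet) {n : ℕ} (x : X _⦋n⦌) (i k : Fin (n + 1)) : Prop :=
  ∃ j, i ≤ k ∧ k ≤ j ∧ X.vertex x i = X.vertex x j

/-- The equivalence relation `Rₓ` generated by `≈ₓ`. -/
def SSet.vertexRel (X : SSet) {n : ℕ} (x : X _⦋n⦌) : Fin (n + 1) → Fin (n + 1) → Prop :=
  Relation.EqvGen (X.approxRel x)

/- ### Auxiliary lemmas -/

lemma SSet.vertex_map_simplex (A : SSet.{0}) {p q : ℕ}
    (σ : (⦋p⦌ : SimplexCategory) ⟶ ⦋q⦌) (z : A _⦋q⦌) (i : Fin (p + 1)) :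
    A.vertex (A.map σ.op z) i = A.vertex z (σ.toOrderHom i) := by
  dsimp only [SSet.vertex]
  rw [← FunctorToTypes.map_comp_apply, ← op_comp, SimplexCategory.const_comp]

lemma SSet.vertex_naturality {X A : SSet.{0}} (k : X ⟶ A) {p : ℕ}
    (x : X _⦋p⦌) (i : Fin (p + 1)) :
    A.vertex (k.app _ x) i = k.app _ (X.vertex x i) := by
  dsimp only [SSet.vertex]
  exact (FunctorToTypes.naturality k _ x).symm

/-- Eilenberg–Zilber existence: every simplex is an epimorphic image of a
non-degenerate one. -/
lemma SSet.exists_nondeg (A : SSet.{0}) : ∀ (p : ℕ) (y : A _⦋p⦌),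
    ∃ (q : ℕ) (σ : (⦋p⦌ : SimplexCategory) ⟶ ⦋q⦌) (z : A _⦋q⦌),
      Epi σ ∧ ¬ A.IsDegenerate z ∧ y = A.map σ.op z := by
  intro p
  induction p using Nat.strong_induction_on with
  | _ p ih =>
    intro y
    by_cases h : A.IsDegenerate y
    · obtain ⟨q, hq, σ, z, hσ, rfl⟩ := h
      obtain ⟨r, τ, w, hτ, hw, rfl⟩ := ih q hq z
      exact ⟨r, σ ≫ τ, w, @epi_comp _ _ _ _ _ σ hσ τ hτ, hw,
        by rw [op_comp, FunctorToTypes.map_comp_apply]⟩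
    · exact ⟨p, 𝟙 _, y, inferInstance, h, by simp⟩

/-- The vertices of a non-degenerate simplex of a non-singular simplicial set are
pairwise distinct. -/
lemma SSet.vertex_injective {A : SSet.{0}} (hA : A.NonSingular) {p : ℕ} (z : A _⦋p⦌)
    (hz : ¬ A.IsDegenerate z) : Function.Injective (A.vertex z) := by
  intro a b h
  haveI := hA p z hz
  have hmono : Mono (((SSet.yonedaEquiv (X := A) (n := ⦋p⦌)).symm z).app (Opposite.op ⦋0⦌)) :=
    (NatTrans.mono_iff_mono_app' (D := Type) ((SSet.yonedaEquiv (X := A) (n := ⦋p⦌)).symm z)).mp inferInstance (Opposite.op ⦋0⦌)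
  have hinj := (mono_iff_injective _).mp hmono
  have h2 : ((SSet.yonedaEquiv (X := A) (n := ⦋p⦌)).symm z).app (Opposite.op ⦋0⦌)
      (ULift.up (SimplexCategory.const ⦋0⦌ ⦋p⦌ a))
      = ((SSet.yonedaEquiv (X := A) (n := ⦋p⦌)).symm z).app (Opposite.op ⦋0⦌)
      (ULift.up (SimplexCategory.const ⦋0⦌ ⦋p⦌ b)) := h
  have h3 := hinj h2
  have h4 : SimplexCategory.const ⦋0⦌ ⦋p⦌ a = SimplexCategory.const ⦋0⦌ ⦋p⦌ b :=
    congrArg ULift.down h3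
  have := congrArg (fun f => SimplexCategory.Hom.toOrderHom f 0) h4
  simpa using this

lemma SSet.yonedaEquiv_symm_comp' {X A : SSet.{0}} {p : SimplexCategory}
    (x : X.obj (Opposite.op p)) (k : X ⟶ A) :
    (SSet.yonedaEquiv (X := X) (n := p)).symm x ≫ k = (SSet.yonedaEquiv (X := A) (n := p)).symm (k.app _ x) := by
  exact SSet.yonedaEquiv_symm_comp x k

lemma SSet.standardSimplex_map_comp_yonedaEquiv_symm {A : SSet.{0}}
    {p q : SimplexCategory} (σ : p ⟶ q) (z : A.obj (Opposite.op q)) :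
    SSet.stdSimplex.map σ ≫ (SSet.yonedaEquiv (X := A) (n := q)).symm z
      = (SSet.yonedaEquiv (X := A) (n := p)).symm (A.map σ.op z) := by
  exact SSet.yonedaEquiv_symm_naturality_left σ z

/-- Pushing out along a family of enforcers of non-degenerate simplices yields a
quotient `q : X ⟶ Y` through which every map from `X` to a non-singular simplicial
set factors uniquely. -/
theorem pushout_enforcers_universal {ι : Type} (X : SSet.{0}) (n m : ι → ℕ)
    (x : ∀ j, X _⦋n j⦌) (hx : ∀ j, ¬ X.IsDegenerate (x j))
    (ρ : ∀ j, (⦋n j⦌ : SimplexCategory) ⟶ ⦋m j⦌) (hρ : ∀ j, Epi (ρ j))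
    (henf : ∀ j (i i' : Fin (n j + 1)),
      (ρ j).toOrderHom i = (ρ j).toOrderHom i' ↔ X.vertexRel (x j) i i')
    (A : SSet.{0}) (hA : A.NonSingular) (k : X ⟶ A) :
    letI Φ : (∐ fun j => Δ[n j]) ⟶ (∐ fun j => Δ[m j]) :=
      Limits.Sigma.map fun j => SSet.stdSimplex.map (ρ j)
    letI g : (∐ fun j => Δ[n j]) ⟶ X :=
      Limits.Sigma.desc fun j => (SSet.yonedaEquiv (X := X) (n := ⦋n j⦌)).symm (x j)
    ∃! kbar : pushout Φ g ⟶ A, k = pushout.inr Φ g ≫ kbar := by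
  set Φ : (∐ fun j => Δ[n j]) ⟶ (∐ fun j => Δ[m j]) :=
    Limits.Sigma.map fun j => SSet.stdSimplex.map (ρ j) with hΦdef
  set g : (∐ fun j => Δ[n j]) ⟶ X :=
    Limits.Sigma.desc fun j => (SSet.yonedaEquiv (X := X) (n := ⦋n j⦌)).symm (x j) with hgdef
  haveI : ∀ j, Epi (ρ j) := hρ
  haveI : ∀ j, Epi (SSet.stdSimplex.map (ρ j)) := by
    intro j
    haveI : IsSplitEpi (ρ j) := isSplitEpi_of_epi (ρ j)
    exact (((isSplitEpi_of_epi (ρ j)).exists_splitEpi.some.map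
      (SSet.stdSimplex : SimplexCategory ⥤ SSet)).epi)
  haveI hΦepi : Epi Φ := Limits.Sigma.map_epi _
  -- construct the factorizations on each component
  have key : ∀ j, ∃ h : Δ[m j] ⟶ A,
      SSet.stdSimplex.map (ρ j) ≫ h = (SSet.yonedaEquiv (X := X) (n := ⦋n j⦌)).symm (x j) ≫ k := by
    intro j
    obtain ⟨q, σ, z, hσ, hz, hy⟩ := SSet.exists_nondeg A (n j) (k.app _ (x j))
    have hinj := SSet.vertex_injective hA z hz
    have key2 : ∀ i i', X.vertexRel (x j) i i' →
        σ.toOrderHom i = σ.toOrderHom i' := by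
      intro i i' h
      induction h with
      | rel a b hab =>
        obtain ⟨c, hab1, hbc, hv⟩ := hab
        have h1 : A.vertex (k.app _ (x j)) a = A.vertex (k.app _ (x j)) c := by
          rw [SSet.vertex_naturality, SSet.vertex_naturality, hv]
        rw [hy, SSet.vertex_map_simplex, SSet.vertex_map_simplex] at h1
        have hac := hinj h1
        exact le_antisymm (σ.toOrderHom.monotone hab1)
          ((σ.toOrderHom.monotone hbc).trans hac.symm.le)
      | refl => rfl
      | symm _ _ _ ih => exact ih.symm
      | trans _ _ _ _ _ ih1 ih2 => exact ih1.trans ih2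
    haveI : IsSplitEpi (ρ j) := isSplitEpi_of_epi (ρ j)
    set s : (⦋m j⦌ : SimplexCategory) ⟶ ⦋n j⦌ := section_ (ρ j) with hs
    have hsρ : s ≫ ρ j = 𝟙 _ := IsSplitEpi.id (ρ j)
    refine ⟨SSet.stdSimplex.map (s ≫ σ) ≫ (SSet.yonedaEquiv (X := A) (n := ⦋q⦌)).symm z, ?_⟩
    have hfac : ρ j ≫ (s ≫ σ) = σ := by
      apply SimplexCategory.Hom.ext
      apply OrderHom.ext
      funext i
      have h5 : (ρ j).toOrderHom (s.toOrderHom ((ρ j).toOrderHom i))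
          = (ρ j).toOrderHom i := by
        have := congrArg (fun f => SimplexCategory.Hom.toOrderHom f ((ρ j).toOrderHom i)) hsρ
        simpa [SimplexCategory.comp_toOrderHom] using this
      have h6 := key2 _ _ ((henf j _ _).mp h5)
      simpa [SimplexCategory.comp_toOrderHom] using h6
    have hcomp : SSet.stdSimplex.map (ρ j) ≫ SSet.stdSimplex.map (s ≫ σ) = SSet.stdSimplex.map σ := by
      exact (SSet.stdSimplex.map_comp _ _).symm.trans (congrArg _ hfac)
    rw [← Category.assoc, hcomp,
      SSet.standardSimplex_map_comp_yonedaEquiv_symm, ← hy,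
      SSet.yonedaEquiv_symm_comp']
  choose h hh using key
  have comm : Φ ≫ Limits.Sigma.desc h = g ≫ k := by
    apply Limits.Sigma.hom_ext
    intro j
    rw [hΦdef, hgdef]
    simp only [Sigma.ι_map_assoc, Sigma.ι_desc, Sigma.ι_desc_assoc, Discrete.natTrans_app, colimit.ι_desc, Cofan.mk_ι_app, colimit.ι_desc_assoc]
    exact hh j
  refine ⟨pushout.desc (Limits.Sigma.desc h) k comm, (pushout.inr_desc _ _ _).symm, ?_⟩
  intro kbar' hk'
  apply pushout.hom_ext
  · rw [← cancel_epi Φ]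
    rw [← Category.assoc, ← Category.assoc, pushout.condition, Category.assoc,
      Category.assoc, ← hk', pushout.inr_desc]
  · rw [pushout.inr_desc, ← hk']
end

section
/- Let X be a simplicial set and x an n-simplex of X. The equivalence relation Rₓ on Fin (n+1) generated by ≈ₓ is the equality relation if and only if the vertices of x are pairwise distinct (i.e. i ↦ x·εᵢ is injective). Consequently, any enforcer of x is an isomorphism of the simplex category if and only if the representing map of x is a monomorphism. -/
open CategoryTheory CategoryTheory.Limits Simplicial SSet

/-- `Rₓ` is the equality relation iff the vertices of `x` are pairwise distinct;
consequently any enforcer of `x` is an isomorphism iff the representing map of `x`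
is a monomorphism. -/
lemma aux_symm_app (X : SSet) {n : ℕ} (x : X _⦋n⦌) (m : SimplexCategoryᵒᵖ)
    (g : (Δ[n] : SSet).obj m) :
    ((SSet.yonedaEquiv (X := X) (n := ⦋n⦌)).symm x).app m g = X.map ((SSet.stdSimplex.objEquiv g)).op x :=
  rfl

lemma aux_mono_iff (X : SSet) {n : ℕ} (x : X _⦋n⦌) :
    Mono ((SSet.yonedaEquiv (X := X) (n := ⦋n⦌)).symm x) ↔ Function.Injective (X.vertex x) := by
  constructor
  · intro hm i j hij
    rw [NatTrans.mono_iff_mono_app] at hm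
    have h0 := hm (Opposite.op ⦋0⦌)
    rw [CategoryTheory.mono_iff_injective] at h0
    have : ((SSet.yonedaEquiv (X := X) (n := ⦋n⦌)).symm x).app (Opposite.op ⦋0⦌)
        ((SSet.stdSimplex.objEquiv).symm (SimplexCategory.const ⦋0⦌ ⦋n⦌ i))
        = ((SSet.yonedaEquiv (X := X) (n := ⦋n⦌)).symm x).app (Opposite.op ⦋0⦌)
        ((SSet.stdSimplex.objEquiv).symm (SimplexCategory.const ⦋0⦌ ⦋n⦌ j)) := hij
    have h2 := h0 this
    have h3 : SimplexCategory.const ⦋0⦌ ⦋n⦌ i = SimplexCategory.const ⦋0⦌ ⦋n⦌ j := by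
      simpa using congrArg (SSet.stdSimplex.objEquiv) h2
    have := congrArg (fun f => f.toOrderHom (0 : Fin 1)) h3
    simpa using this
  · intro hinj
    rw [NatTrans.mono_iff_mono_app]
    intro m
    rw [CategoryTheory.mono_iff_injective]
    intro g h hgh
    have key : ∀ (f : m.unop ⟶ ⦋n⦌) (i : Fin (m.unop.len + 1)),
        X.vertex x (f.toOrderHom i) = X.map (SimplexCategory.const ⦋0⦌ m.unop i ≫ f).op x := by
      intro f i
      rw [SimplexCategory.const_comp]; rfl
    set f := SSet.stdSimplex.objEquiv g
    set f' := SSet.stdSimplex.objEquiv h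
    have hff : f = f' := by
      ext i : 3
      apply hinj
      rw [key f i, key f' i]
      simp only [op_comp, FunctorToTypes.map_comp_apply]
      exact congrArg (X.map (SimplexCategory.const ⦋0⦌ m.unop i).op) hgh
    exact (SSet.stdSimplex.objEquiv).injective hff

/-- Main theorem. -/
theorem vertexRel_eq_iff_embedded (X : SSet) {n : ℕ} (x : X _⦋n⦌) :
    ((∀ i j, X.vertexRel x i j ↔ i = j) ↔ Function.Injective (X.vertex x)) ∧
    ∀ (m : ℕ) (ρ : (⦋n⦌ : SimplexCategory) ⟶ ⦋m⦌), Epi ρ →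
      (∀ i j, ρ.toOrderHom i = ρ.toOrderHom j ↔ X.vertexRel x i j) →
      (IsIso ρ ↔ Mono ((SSet.yonedaEquiv (X := X) (n := ⦋n⦌)).symm x)) := by
  have part1 : (∀ i j, X.vertexRel x i j ↔ i = j) ↔ Function.Injective (X.vertex x) := by
    constructor
    · intro h i j hij
      rcases le_total i j with hle | hle
      · exact (h i j).1 (Relation.EqvGen.rel _ _ ⟨j, hle, le_refl j, hij⟩)
      · exact ((h j i).1 (Relation.EqvGen.rel _ _ ⟨i, hle, le_refl i, hij.symm⟩)).symm
    · intro hinj i j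
      constructor
      · intro h
        induction h with
        | rel a b hab => obtain ⟨j', h1, h2, h3⟩ := hab
                         have := hinj h3
                         exact le_antisymm h1 (this ▸ h2)
        | refl a => rfl
        | symm a b _ ih => exact ih.symm
        | trans a b c _ _ ih1 ih2 => exact ih1.trans ih2
      · rintro rfl; exact Relation.EqvGen.refl i
  refine ⟨part1, fun m ρ hepi h => ?_⟩
  constructor
  · intro hiso
    rw [aux_mono_iff]
    rw [← part1]
    intro i j
    constructor
    · intro hij
      have hmono : Mono ρ := inferInstance
      have hρinj := SimplexCategory.mono_iff_injective.1 hmono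
      exact hρinj ((h i j).2 hij)
    · rintro rfl; exact Relation.EqvGen.refl i
  · intro hmono
    have hinj := (aux_mono_iff X x).1 hmono
    have hR := part1.2 hinj
    apply SimplexCategory.isIso_of_bijective
    constructor
    · intro i j hij
      exact (hR i j).1 ((h i j).1 hij)
    · exact SimplexCategory.epi_iff_surjective.1 hepi
end

section
/- Let F be a diagram of simplicial sets indexed by a small category I such that F(i) is non-singular for every object i of I. Then the limit of F computed in the category SSet is a non-singular simplicial set. -/
open CategoryTheory CategoryTheory.Limits Simplicial SSet

/-- Naturality of vertices. -/
lemma SSet.vertex_map (X : SSet) {n m : ℕ} (σ : (⦋n⦌ : SimplexCategory) ⟶ ⦋m⦌)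
    (y : X _⦋m⦌) (i : Fin (n + 1)) :
    X.vertex (X.map σ.op y) i = X.vertex y (σ.toOrderHom i) := by
  dsimp [SSet.vertex]
  rw [← FunctorToTypes.map_comp_apply, ← op_comp, SimplexCategory.const_comp]

/-- Every simplex is obtained from a non-degenerate simplex by an epimorphism. -/
lemma SSet.exists_nondeg_s18 (X : SSet) : ∀ (n : ℕ) (x : X _⦋n⦌),
    ∃ (m : ℕ) (σ : (⦋n⦌ : SimplexCategory) ⟶ ⦋m⦌) (y : X _⦋m⦌),
      Epi σ ∧ ¬ X.IsDegenerate y ∧ x = X.map σ.op y := by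
  intro n
  induction n using Nat.strong_induction_on with
  | _ n ih =>
    intro x
    by_cases hx : X.IsDegenerate x
    · obtain ⟨m, hm, σ, y, hσ, rfl⟩ := hx
      obtain ⟨m', τ, y', hτ, hy', rfl⟩ := ih m hm y
      refine ⟨m', σ ≫ τ, y', @epi_comp _ _ _ _ _ _ hσ _ hτ, hy', ?_⟩
      rw [← FunctorToTypes.map_comp_apply, ← op_comp]
    · exact ⟨n, 𝟙 _, x, inferInstance, hx, by simp⟩

/-- In a non-singular simplicial set, a non-degenerate simplex has distinct vertices. -/
lemma SSet.vertex_injective_s18 {X : SSet} (hX : X.NonSingular) {m : ℕ} {y : X _⦋m⦌}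
    (hy : ¬ X.IsDegenerate y) {a b : Fin (m + 1)}
    (hab : X.vertex y a = X.vertex y b) : a = b := by
  have hmono : Mono ((SSet.yonedaEquiv (X := X) (n := ⦋m⦌)).symm y) := hX m y hy
  have happ : Mono (((SSet.yonedaEquiv (X := X) (n := ⦋m⦌)).symm y).app (Opposite.op ⦋0⦌)) :=
    (NatTrans.mono_iff_mono_app ((SSet.yonedaEquiv (X := X) (n := ⦋m⦌)).symm y)).mp hmono _
  rw [CategoryTheory.mono_iff_injective] at happ
  have h0 : ∀ (c : Fin (m + 1)),
      ((SSet.yonedaEquiv (X := X) (n := ⦋m⦌)).symm y).app (Opposite.op ⦋0⦌)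
        ((SSet.stdSimplex.objEquiv).symm (SimplexCategory.const ⦋0⦌ ⦋m⦌ c))
        = X.vertex y c := fun c => rfl
  have := happ (a₁ := (SSet.stdSimplex.objEquiv).symm (SimplexCategory.const ⦋0⦌ ⦋m⦌ a))
    (a₂ := (SSet.stdSimplex.objEquiv).symm (SimplexCategory.const ⦋0⦌ ⦋m⦌ b))
    (by rw [h0, h0]; exact hab)
  have := (SSet.stdSimplex.objEquiv).symm.injective this
  exact congrArg (fun f => f.toOrderHom 0) this

/-- Factoring through a degeneracy when two vertices agree. -/
lemma SSet.exists_sigma_factor {X : SSet} (hX : X.NonSingular) {n : ℕ} (x : X _⦋n + 1⦌)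
    {a b : Fin (n + 2)} (j : Fin (n + 1)) (ha : a ≤ j.castSucc) (hb : j.succ ≤ b)
    (hab : X.vertex x a = X.vertex x b) :
    ∃ z : X _⦋n⦌, x = X.map (SimplexCategory.σ j).op z := by
  obtain ⟨m, σ, y, hσ, hy, rfl⟩ := X.exists_nondeg_s18 (n + 1) x
  rw [X.vertex_map, X.vertex_map] at hab
  have hab' : σ.toOrderHom a = σ.toOrderHom b := vertex_injective_s18 hX hy hab
  have hkey : σ.toOrderHom j.castSucc = σ.toOrderHom j.succ := by
    apply le_antisymm (σ.toOrderHom.monotone (by simp [Fin.castSucc_lt_succ_iff,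
      Fin.castSucc_le_castSucc_iff, le_of_lt (Fin.castSucc_lt_succ (i := j))]))
    calc σ.toOrderHom j.succ ≤ σ.toOrderHom b := σ.toOrderHom.monotone hb
      _ = σ.toOrderHom a := hab'.symm
      _ ≤ σ.toOrderHom j.castSucc := σ.toOrderHom.monotone ha
  have hfac : σ = SimplexCategory.σ j ≫ (SimplexCategory.δ j.castSucc ≫ σ) := by
    apply SimplexCategory.Hom.ext
    apply OrderHom.ext
    funext k
    show σ.toOrderHom k = σ.toOrderHom ((Fin.castSucc j).succAbove (j.predAbove k))
    by_cases hk : k = j.castSucc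
    · subst hk
      rw [Fin.predAbove_castSucc_self, Fin.succAbove_castSucc_self, ← hkey]
    · rw [Fin.succAbove_predAbove hk]
  refine ⟨X.map (SimplexCategory.δ j.castSucc ≫ σ).op y, ?_⟩
  rw [← FunctorToTypes.map_comp_apply, ← op_comp, ← hfac]

/-- Elements of a level of a limit of simplicial sets are determined by their projections. -/
lemma limit_level_ext {I : Type} [SmallCategory I] (F : I ⥤ SSet.{0})
    (k : SimplexCategoryᵒᵖ) (u v : (limit F).obj k)
    (h : ∀ i, (limit.π F i).app k u = (limit.π F i).app k v) : u = v := by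
  have hinj : Function.Injective (limitObjIsoLimitCompEvaluation F k).hom := by
    intro p q hpq
    have := congrArg (limitObjIsoLimitCompEvaluation F k).inv hpq
    simpa using this
  apply hinj
  apply Types.limit_ext
  intro i
  have hπ := limitObjIsoLimitCompEvaluation_hom_π F i k
  have hu := types_congr_hom hπ u
  have hv := types_congr_hom hπ v
  simp only [types_comp_apply] at hu hv
  rw [hu, hv]
  exact h i

/-- A limit in `SSet` of a diagram of non-singular simplicial sets is non-singular. -/
theorem nonsingular_limit {I : Type} [SmallCategory I] (F : I ⥤ SSet.{0})
    (h : ∀ i, (F.obj i).NonSingular) : SSet.NonSingular (limit F) := by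
  intro n x hx
  -- Step 1: the vertices of x are pairwise distinct.
  have key : ∀ {a b : Fin (n + 1)}, a < b → (limit F).vertex x a ≠ (limit F).vertex x b := by
    rintro a b hlt hab
    -- n must be at least 1
    obtain _ | m := n
    · have := hlt
      rw [Fin.lt_def] at this
      omega
    set j : Fin (m + 1) := ⟨a.val, by omega⟩ with hj
    have ha : a ≤ j.castSucc := le_of_eq (Fin.ext rfl)
    have hb : j.succ ≤ b := by
      rw [Fin.le_def]
      show a.val + 1 ≤ b.val
      omega
    -- componentwise factorizations
    have hcomp : ∀ i, ∃ z : (F.obj i) _⦋m⦌,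
        (limit.π F i).app (Opposite.op ⦋m + 1⦌) x = (F.obj i).map (SimplexCategory.σ j).op z := by
      intro i
      apply SSet.exists_sigma_factor (h i) _ j ha hb
      dsimp [SSet.vertex]
      rw [← FunctorToTypes.naturality, ← FunctorToTypes.naturality]
      exact congrArg _ hab
    choose z hz using hcomp
    -- injectivity of the degeneracy action
    have hinj : ∀ (X : SSet) (u v : X _⦋m⦌),
        X.map (SimplexCategory.σ j).op u = X.map (SimplexCategory.σ j).op v → u = v := by
      intro X u v huv
      have := congrArg (X.map (SimplexCategory.δ j.castSucc).op) huv
      rw [← FunctorToTypes.map_comp_apply, ← FunctorToTypes.map_comp_apply,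
        ← op_comp, SimplexCategory.δ_comp_σ_self] at this
      simpa using this
    -- compatibility of the family z
    have hcompat : ∀ (i i' : I) (φ : i ⟶ i'),
        (F ⋙ (evaluation _ _).obj (Opposite.op ⦋m⦌)).map φ (z i) = z i' := by
      intro i i' φ
      apply hinj (F.obj i')
      show (F.obj i').map (SimplexCategory.σ j).op ((F.map φ).app _ (z i)) = _
      rw [← FunctorToTypes.naturality, ← hz, ← hz]
      have := congrFun (congrArg (fun f => f.app (Opposite.op ⦋m + 1⦌)) (limit.w F φ)) x
      exact this
    set G := F ⋙ (evaluation _ _).obj (Opposite.op ⦋m⦌) with hG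
    set z' : limit G := Types.Limit.mk G z hcompat with hz'
    set w : (limit F).obj (Opposite.op ⦋m⦌) := (limitObjIsoLimitCompEvaluation F (Opposite.op ⦋m⦌)).inv z'
      with hw
    have hxw : x = (limit F).map (SimplexCategory.σ j).op w := by
      apply limit_level_ext F
      intro i
      rw [FunctorToTypes.naturality]
      have h1 : (limit.π F i).app (Opposite.op ⦋m⦌) w = z i := by
        have := types_congr_hom (limitObjIsoLimitCompEvaluation_inv_π_app F i (Opposite.op ⦋m⦌)) z'
        simp only [types_comp_apply] at this
        rw [hw]
        exact this.trans (Types.Limit.π_mk G z hcompat i)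
      rw [h1, ← hz]
    exact hx ⟨m, by omega, SimplexCategory.σ j, w, inferInstance, hxw⟩
  have hvert : ∀ {a b : Fin (n + 1)}, (limit F).vertex x a = (limit F).vertex x b → a = b := by
    intro a b hab
    rcases lt_trichotomy a b with hlt | heq | hgt
    · exact absurd hab (key hlt)
    · exact heq
    · exact absurd hab.symm (key hgt)
  -- Step 2: distinct vertices imply the representing map is mono.
  rw [NatTrans.mono_iff_mono_app]
  intro k
  rw [CategoryTheory.mono_iff_injective]
  intro α β hαβ
  have hαβ' : (limit F).map ((SSet.stdSimplex.objEquiv) α).op x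
      = (limit F).map ((SSet.stdSimplex.objEquiv) β).op x := hαβ
  apply (SSet.stdSimplex.objEquiv).injective
  apply SimplexCategory.Hom.ext
  apply OrderHom.ext
  funext t
  apply hvert
  have hv : ∀ (γ : k.unop ⟶ ⦋n⦌),
      (limit F).vertex x (γ.toOrderHom t) = (limit F).map (SimplexCategory.const ⦋0⦌ k.unop t).op ((limit F).map γ.op x) := by
    intro γ
    show (limit F).map (SimplexCategory.const ⦋0⦌ ⦋n⦌ (γ.toOrderHom t)).op x = _
    rw [← FunctorToTypes.map_comp_apply, ← op_comp, SimplexCategory.const_comp]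
  rw [hv, hv, hαβ']
end
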